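/- Let p be a prime, (n_k) a strictly increasing sequence of nonnegative integers with n_{k+1} − n_k → ∞, u_k the character of Δ_p given by u_k(ω) = exp(2πi (a_0 + a_1 p + … + a_{n_k} p^{n_k}) / p^{n_k+1}), and let G_u = s_u(Δ_p) = {ω ∈ Δ_p : u_k(ω) → 1} be equipped with the metric ρ(x, y) = d(x, y) + sup_k |u_k(x) − u_k(y)|, where d is the standard metric of Δ_p. Then the cyclic subgroup generated by ω_0 = 1 (the p-adic integer with digits (1, 0, 0, …)) is dense in (G_u, ρ); in particular the topological group G_u is monothetic. -/

import Mathlib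

open Filter Topology

/-- The `i`-th digit `a_i ∈ {0, …, p-1}` of the canonical expansion `ω = Σ_i a_i p^i`
of a `p`-adic integer `ω`. -/
noncomputable def padicDigit (p : ℕ) [Fact p.Prime] (ω : ℤ_[p]) (i : ℕ) : ℕ :=
  (ω.appr (i + 1) - ω.appr i) / p ^ i

/-- The value at `ω ∈ Δ_p` of the character of `Δ_p` given by the element `1/p^m ∈ ℤ(p^∞)`:
`exp(2πi ω.appr m / p^m)`. -/
noncomputable def padicChar (p : ℕ) [Fact p.Prime] (m : ℕ) (ω : ℤ_[p]) : ℂ :=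
  Complex.exp (2 * Real.pi * Complex.I * (ω.appr m : ℂ) / (p : ℂ) ^ m)

/-- The standard metric of `Δ_p`: `d(x, y) = 2⁻ⁿ` where `n` is the first index at which the
digits of `x` and `y` differ (and `d(x, x) = 0`). -/
noncomputable def padicStdDist (p : ℕ) [Fact p.Prime] (x y : ℤ_[p]) : ℝ :=
  open scoped Classical in
  if x = y then 0 else (2 : ℝ)⁻¹ ^ sInf {i : ℕ | padicDigit p x i ≠ padicDigit p y i}

/-- The subgroup `s_u(Δ_p) = {ω : u_k(ω) → 1}` determined by the sequence of characters
`u_k = 1/p^{n_k + 1}`. -/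
def sU (p : ℕ) [Fact p.Prime] (n : ℕ → ℕ) : Set ℤ_[p] :=
  {ω | Tendsto (fun k => padicChar p (n k + 1) ω) atTop (𝓝 1)}

/-- The Polish group metric `ρ(x, y) = d(x, y) + sup_k |u_k(x) − u_k(y)|` on `s_u(Δ_p)`. -/
noncomputable def padicRho (p : ℕ) [Fact p.Prime] (n : ℕ → ℕ) (x y : ℤ_[p]) : ℝ :=
  padicStdDist p x y +
    ⨆ k : ℕ, ‖padicChar p (n k + 1) x - padicChar p (n k + 1) y‖

/- ### Auxiliary trigonometric lemmas -/

lemma myAbsExp (θ : ℝ) :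
    ‖Complex.exp (θ * Complex.I) - 1‖ = 2 * |Real.sin (θ / 2)| := by
  have h : Complex.exp (θ * Complex.I) - 1
      = Complex.ofReal (Real.cos θ - 1) + (Real.sin θ : ℝ) * Complex.I := by
    rw [Complex.exp_mul_I, ← Complex.ofReal_cos, ← Complex.ofReal_sin]
    push_cast
    ring
  rw [h, Complex.norm_def, Complex.normSq_add_mul_I, Real.abs_sin_half]
  have h1 : (Real.cos θ - 1) ^ 2 + Real.sin θ ^ 2 = 2 ^ 2 * ((1 - Real.cos θ) / 2) := by
    have := Real.sin_sq_add_cos_sq θ; nlinarith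
  rw [h1, Real.sqrt_mul (by positivity), Real.sqrt_sq (by norm_num)]

lemma myUpper (θ : ℝ) : ‖Complex.exp (θ * Complex.I) - 1‖ ≤ |θ| := by
  rw [myAbsExp]
  have h := Real.abs_sin_le_abs (x := θ / 2)
  have : |θ / 2| = |θ| / 2 := by rw [abs_div]; norm_num
  linarith

lemma myLower {θ : ℝ} (h0 : 0 ≤ θ) (h1 : θ < 1) :
    4 * min θ (1 - θ) ≤
      ‖Complex.exp ((((2 * Real.pi * θ : ℝ)) : ℂ) * Complex.I) - 1‖ := by
  rw [myAbsExp]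
  have hs : |Real.sin (2 * Real.pi * θ / 2)| = Real.sin (Real.pi * θ) := by
    rw [show 2 * Real.pi * θ / 2 = Real.pi * θ by ring]
    exact abs_of_nonneg (Real.sin_nonneg_of_nonneg_of_le_pi (by positivity)
      (by nlinarith [Real.pi_pos]))
  rw [hs]
  rcases le_total θ (1/2) with hc | hc
  · have hmin : min θ (1 - θ) = θ := min_eq_left (by linarith)
    have := Real.mul_le_sin (x := Real.pi * θ) (by positivity) (by nlinarith [Real.pi_pos])
    rw [hmin]
    have hpi := Real.pi_pos
    have : 2 * θ ≤ Real.sin (Real.pi * θ) := by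
      calc 2 * θ = 2 / Real.pi * (Real.pi * θ) := by field_simp
        _ ≤ _ := this
    linarith
  · have hmin : min θ (1 - θ) = 1 - θ := min_eq_right (by linarith)
    have hr : Real.sin (Real.pi * θ) = Real.sin (Real.pi * (1 - θ)) := by
      rw [show Real.pi * (1 - θ) = Real.pi - Real.pi * θ by ring, Real.sin_pi_sub]
    have := Real.mul_le_sin (x := Real.pi * (1 - θ)) (by nlinarith [Real.pi_pos])
      (by nlinarith [Real.pi_pos])
    have hpi := Real.pi_pos
    have h2 : 2 * (1 - θ) ≤ Real.sin (Real.pi * (1 - θ)) := by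
      calc 2 * (1 - θ) = 2 / Real.pi * (Real.pi * (1 - θ)) := by field_simp
        _ ≤ _ := this
    rw [hmin, hr]
    linarith

/- ### Auxiliary `p`-adic lemmas -/

variable {p : ℕ} [hp : Fact p.Prime]

lemma myApprCongr (x y : ℤ_[p]) (j : ℕ) (h : ‖x - y‖ ≤ (p:ℝ) ^ (-(j:ℤ))) :
    x.appr j = y.appr j := by
  have ha := PadicInt.appr_spec j x
  have hb := PadicInt.appr_spec j y
  rw [PadicInt.norm_le_pow_iff_mem_span_pow] at h
  have hmem : (((x.appr j : ℤ) - (y.appr j : ℤ) : ℤ) : ℤ_[p]) ∈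
      (Ideal.span {(p : ℤ_[p]) ^ j} : Ideal ℤ_[p]) := by
    have heq : (((x.appr j : ℤ) - (y.appr j : ℤ) : ℤ) : ℤ_[p])
        = -(x - (x.appr j)) + (x - y) + (y - (y.appr j)) := by push_cast; ring
    rw [heq]
    exact add_mem (add_mem (neg_mem ha) h) hb
  rw [← PadicInt.norm_le_pow_iff_mem_span_pow, PadicInt.norm_int_le_pow_iff_dvd] at hmem
  have hmod : x.appr j ≡ y.appr j [MOD p ^ j] := by
    rw [Nat.modEq_iff_dvd]
    push_cast
    exact dvd_sub_comm.mp hmem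
  exact hmod.eq_of_lt_of_lt (PadicInt.appr_lt x j) (PadicInt.appr_lt y j)

lemma myApprSucc (x : ℤ_[p]) (i : ℕ) :
    x.appr (i + 1) = x.appr i + padicDigit p x i * p ^ i := by
  have hdvd := PadicInt.dvd_appr_sub_appr x i (i + 1) (Nat.le_succ i)
  have hmono := x.appr_mono (Nat.le_succ i)
  unfold padicDigit
  rw [Nat.div_mul_cancel hdvd, Nat.add_sub_cancel' hmono]

lemma myExt (x y : ℤ_[p]) (h : ∀ i, padicDigit p x i = padicDigit p y i) : x = y := by
  have happr : ∀ j, x.appr j = y.appr j := by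
    intro j
    induction j with
    | zero => rfl
    | succ i ih => rw [myApprSucc, myApprSucc, ih, h i]
  by_contra hne
  have hpos : 0 < ‖x - y‖ := by
    simpa [norm_pos_iff, sub_eq_zero] using hne
  obtain ⟨j, hj⟩ := exists_pow_lt_of_lt_one hpos
    (show (p:ℝ)⁻¹ < 1 by
      rw [inv_lt_one_iff₀]; right; exact_mod_cast hp.1.one_lt)
  have hle : ‖x - y‖ ≤ (p:ℝ) ^ (-(j:ℤ)) := by
    rw [PadicInt.norm_le_pow_iff_mem_span_pow]
    have ha := PadicInt.appr_spec j x
    have hb := PadicInt.appr_spec j y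
    have heq : x - y = (x - (x.appr j)) - (y - (y.appr j)) := by
      rw [happr j]; ring
    rw [heq]
    exact sub_mem ha hb
  rw [zpow_neg, zpow_natCast, ← inv_pow] at hle
  linarith

lemma myNegPowMono {j M : ℕ} (h : j ≤ M) : (p:ℝ) ^ (-(M:ℤ)) ≤ (p:ℝ) ^ (-(j:ℤ)) := by
  apply zpow_le_zpow_right₀ (by exact_mod_cast hp.1.one_le)
  omega

lemma myStdDistLe (x y : ℤ_[p]) (M : ℕ) (h : ‖x - y‖ ≤ (p:ℝ) ^ (-(M:ℤ))) :
    padicStdDist p x y ≤ (2:ℝ)⁻¹ ^ M := by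
  unfold padicStdDist
  split_ifs with hxy
  · positivity
  · have hS : {i : ℕ | padicDigit p x i ≠ padicDigit p y i}.Nonempty := by
      by_contra hS
      rw [Set.not_nonempty_iff_eq_empty] at hS
      refine hxy (myExt x y fun i => ?_)
      by_contra hne
      exact Set.eq_empty_iff_forall_notMem.mp hS i hne
    have hMle : M ≤ sInf {i : ℕ | padicDigit p x i ≠ padicDigit p y i} := by
      apply le_csInf hS
      intro i hi
      by_contra hlt
      push_neg at hlt
      apply hi
      unfold padicDigit
      rw [myApprCongr x y i (h.trans (myNegPowMono (by omega))),
        myApprCongr x y (i+1) (h.trans (myNegPowMono (by omega)))]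
    exact pow_le_pow_of_le_one (by norm_num) (by norm_num) hMle

lemma myCharForm (m : ℕ) (x : ℤ_[p]) :
    padicChar p m x
      = Complex.exp ((((2 * Real.pi * (x.appr m / p ^ m) : ℝ)) : ℂ) * Complex.I) := by
  have hp0 : ((p : ℂ)) ^ m ≠ 0 := pow_ne_zero _ (Nat.cast_ne_zero.2 hp.1.pos.ne')
  unfold padicChar
  congr 1
  push_cast
  field_simp

lemma myCharInt (m : ℕ) (q : ℤ) :
    padicChar p m (q : ℤ_[p])
      = Complex.exp ((((2 * Real.pi * q / p ^ m) : ℝ) : ℂ) * Complex.I) := by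
  set a : ℕ := ((q : ℤ_[p])).appr m with ha
  have hspec := PadicInt.appr_spec m (q : ℤ_[p])
  rw [← PadicInt.norm_le_pow_iff_mem_span_pow] at hspec
  have hdvd : ((p : ℤ) ^ m) ∣ (q - (a : ℤ)) := by
    rw [← PadicInt.norm_int_le_pow_iff_dvd]
    push_cast
    exact hspec
  obtain ⟨t, ht⟩ := hdvd
  have hq : (q : ℝ) = (a : ℝ) + (p : ℝ) ^ m * (t : ℝ) := by
    have : (q : ℝ) - a = (p:ℝ)^m * t := by exact_mod_cast congrArg (Int.cast : ℤ → ℝ) ht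
    linarith
  rw [myCharForm]
  have harg : (((2 * Real.pi * q / p ^ m) : ℝ) : ℂ) * Complex.I
      = (((2 * Real.pi * (((q:ℤ_[p]).appr m) / p ^ m) : ℝ)) : ℂ) * Complex.I
        + (t : ℂ) * (2 * Real.pi * Complex.I) := by
    have hp0C : ((p : ℂ)) ^ m ≠ 0 := pow_ne_zero _ (Nat.cast_ne_zero.2 hp.1.pos.ne')
    rw [← ha]
    push_cast [hq]
    field_simp
  rw [harg, Complex.exp_add, Complex.exp_int_mul_two_pi_mul_I, mul_one]

/-- Let `p` be a prime and `(n_k)` strictly increasing with `n_{k+1} - n_k → ∞`. The cyclic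
subgroup generated by `ω₀ = 1` (digits `(1,0,0,…)`) is dense in `G_u = (s_u(Δ_p), ρ)`;
in particular `G_u` is monothetic. -/
theorem zmultiples_one_dense_in_Gu
    (p : ℕ) [Fact p.Prime] (n : ℕ → ℕ) (hmono : StrictMono n)
    (hdiff : Tendsto (fun k => n (k + 1) - n k) atTop atTop) :
    ∀ ω ∈ sU p n, ∀ ε > (0 : ℝ), ∃ q : ℤ, padicRho p n ω (q • (1 : ℤ_[p])) < ε := by
  intro ω hω ε hε
  have hp2 : (2:ℝ) ≤ p := by exact_mod_cast (Fact.out : p.Prime).two_le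
  have hppos : (0:ℝ) < p := by linarith
  have hp1 : (1:ℝ) ≤ p := by linarith
  -- choose K
  obtain ⟨K₀, hK₀⟩ := (Metric.tendsto_atTop.mp hω) (min (ε/8) (ε/100))
    (lt_min (by linarith) (by linarith))
  obtain ⟨K₁, hK₁⟩ := exists_pow_lt_of_lt_one (show (0:ℝ) < ε/2 by linarith)
    (show (2:ℝ)⁻¹ < 1 by norm_num)
  set K := max K₀ K₁ with hK
  set M := n K + 1 with hMdef
  have hKle : K ≤ n K := hmono.le_apply
  have hKM : K₁ ≤ M := by omega
  have hhalf : ((2:ℝ)⁻¹) ^ M < ε/2 :=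
    lt_of_le_of_lt (pow_le_pow_of_le_one (by norm_num) (by norm_num) hKM) hK₁
  set a : ℕ := ω.appr M with hadef
  set θ : ℝ := (a : ℝ) / (p:ℝ) ^ M with hθdef
  have hpM : (0:ℝ) < (p:ℝ) ^ M := by positivity
  have hθ0 : 0 ≤ θ := by positivity
  have hθ1 : θ < 1 := by
    rw [hθdef, div_lt_one hpM]
    exact_mod_cast PadicInt.appr_lt ω M
  -- `u_K(ω)` is close to 1, hence `θ` is close to `0` or `1`
  have hKbound : ‖padicChar p M ω - 1‖ < min (ε/8) (ε/100) := by
    have := hK₀ K (le_max_left _ _)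
    rwa [Complex.dist_eq] at this
  have hcharK : padicChar p M ω
      = Complex.exp ((((2 * Real.pi * θ : ℝ)) : ℂ) * Complex.I) := by
    rw [myCharForm]
  have hd0 : min θ (1 - θ) < ε/400 := by
    have h4 := myLower hθ0 hθ1
    rw [← hcharK] at h4
    have h5 : min θ (1-θ) ≤ ‖padicChar p M ω - 1‖ / 4 := by linarith
    have h6 := lt_of_lt_of_le hKbound (min_le_right _ _)
    linarith
  -- the common continuation
  suffices hmain : ∀ q : ℤ, ‖ω - (q : ℤ_[p])‖ ≤ (p:ℝ) ^ (-(M:ℤ)) →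
      |(q:ℝ)| ≤ min θ (1 - θ) * (p:ℝ) ^ M → padicRho p n ω (q • (1 : ℤ_[p])) < ε by
    rcases le_total θ (1/2) with hc | hc
    · refine ⟨(a : ℤ), hmain _ ?_ ?_⟩
      · rw [PadicInt.norm_le_pow_iff_mem_span_pow]
        have := PadicInt.appr_spec M ω
        push_cast
        exact this
      · have hmin : min θ (1 - θ) = θ := min_eq_left (by linarith)
        rw [hmin, hθdef, div_mul_cancel₀ _ hpM.ne']
        push_cast
        rw [abs_of_nonneg (by positivity)]
    · refine ⟨(a : ℤ) - (p:ℤ)^M, hmain _ ?_ ?_⟩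
      · rw [PadicInt.norm_le_pow_iff_mem_span_pow]
        have h1 := PadicInt.appr_spec M ω
        have h2 : (((p:ℤ)^M : ℤ) : ℤ_[p]) ∈ (Ideal.span {(p : ℤ_[p]) ^ M} : Ideal ℤ_[p]) := by
          rw [Ideal.mem_span_singleton]
          exact ⟨1, by push_cast; ring⟩
        have heq : ω - (((a : ℤ) - (p:ℤ)^M : ℤ) : ℤ_[p])
            = (ω - (a : ℤ_[p])) + (((p:ℤ)^M : ℤ) : ℤ_[p]) := by push_cast; ring
        rw [heq]
        exact add_mem h1 h2
      · have hmin : min θ (1 - θ) = 1 - θ := min_eq_right (by linarith)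
        have haM : (a:ℝ) < (p:ℝ)^M := by
          have := hθ1; rw [hθdef, div_lt_one hpM] at this; exact this
        rw [hmin]
        push_cast
        rw [abs_of_nonpos (by linarith), hθdef]
        field_simp
        linarith
  -- proof of the continuation
  intro q hq1 hq2
  have hx : (q • (1 : ℤ_[p])) = (q : ℤ_[p]) := by simp
  rw [hx]
  have hminpos : 0 ≤ min θ (1 - θ) := le_min hθ0 (by linarith)
  have hstd : padicStdDist p ω (q:ℤ_[p]) ≤ (2:ℝ)⁻¹ ^ M := myStdDistLe _ _ _ hq1
  have hsup : (⨆ k, ‖padicChar p (n k + 1) ω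
      - padicChar p (n k + 1) (q:ℤ_[p])‖) ≤ ε/4 := by
    apply ciSup_le
    intro k
    rcases le_or_gt (n k + 1) M with hkM | hkM
    · have he : ω.appr (n k + 1) = ((q:ℤ_[p])).appr (n k + 1) :=
        myApprCongr ω (q:ℤ_[p]) (n k + 1) (hq1.trans (myNegPowMono hkM))
      have : padicChar p (n k + 1) ω = padicChar p (n k + 1) (q:ℤ_[p]) := by
        unfold padicChar
        rw [he]
      rw [this, sub_self, norm_zero]
      linarith
    · have hkK : K < k := by
        by_contra hkk
        push_neg at hkk
        have := hmono.monotone hkk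
        omega
      have h1 : ‖padicChar p (n k + 1) ω - 1‖ < ε/8 := by
        have := hK₀ k (le_trans (le_max_left _ _) hkK.le)
        rw [Complex.dist_eq] at this
        exact lt_of_lt_of_le this (min_le_left _ _)
      have h2 : ‖padicChar p (n k + 1) (q:ℤ_[p]) - 1‖ ≤ ε/8 := by
        rw [myCharInt]
        refine (myUpper _).trans ?_
        have hm1 : M + 1 ≤ n k + 1 := by omega
        have hpm : (p:ℝ) ^ (M+1) ≤ (p:ℝ) ^ (n k + 1) := pow_le_pow_right₀ hp1 hm1
        have hpmpos : (0:ℝ) < (p:ℝ) ^ (n k + 1) := by positivity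
        have hqle : |(q:ℝ)| ≤ (ε/400) * (p:ℝ)^M := by
          calc |(q:ℝ)| ≤ min θ (1-θ) * (p:ℝ)^M := hq2
            _ ≤ (ε/400) * (p:ℝ)^M := by nlinarith
        rw [abs_div, abs_of_pos hpmpos, div_le_iff₀ hpmpos]
        have hπ4 := Real.pi_le_four
        have hπ0 := Real.pi_pos
        have hq0 : (0:ℝ) ≤ |(q:ℝ)| := abs_nonneg _
        have habs2 : |2 * Real.pi * (q:ℝ)| = 2 * Real.pi * |(q:ℝ)| := by
          rw [abs_mul, abs_of_pos (by linarith)]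
        rw [habs2]
        have hps : (p:ℝ) ^ (M+1) = (p:ℝ) * (p:ℝ)^M := by ring
        have key1 : 2 * Real.pi * |(q:ℝ)| ≤ 8 * ((ε/400) * (p:ℝ)^M) :=
          mul_le_mul (by linarith) hqle hq0 (by norm_num)
        have key2 : (ε/8) * ((p:ℝ) * (p:ℝ)^M) ≤ ε/8 * (p:ℝ)^(n k + 1) := by
          have h' : (p:ℝ) * (p:ℝ)^M ≤ (p:ℝ)^(n k + 1) := by rw [← hps]; exact hpm
          exact mul_le_mul_of_nonneg_left h' (by linarith)
        have key3 : 8 * ((ε/400) * (p:ℝ)^M) ≤ (ε/8) * ((p:ℝ) * (p:ℝ)^M) := by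
          nlinarith [mul_nonneg (show (0:ℝ) ≤ (p:ℝ) - 2 by linarith)
            (mul_nonneg hε.le hpM.le)]
        linarith
      calc ‖padicChar p (n k + 1) ω - padicChar p (n k + 1) (q:ℤ_[p])‖
          ≤ ‖padicChar p (n k + 1) ω - 1‖
            + ‖1 - padicChar p (n k + 1) (q:ℤ_[p])‖ :=
            norm_sub_le_norm_sub_add_norm_sub _ 1 _
        _ ≤ ε/8 + ε/8 := by
            rw [norm_sub_rev 1]
            exact add_le_add h1.le h2
        _ ≤ ε/4 := by linarith
  unfold padicRho
  calc padicStdDist p ω (q:ℤ_[p]) +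
      (⨆ k, ‖padicChar p (n k + 1) ω - padicChar p (n k + 1) (q:ℤ_[p])‖)
      ≤ (2:ℝ)⁻¹ ^ M + ε/4 := add_le_add hstd hsup
    _ < ε/2 + ε/4 := by linarith
    _ < ε := by linarith
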